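/- Let G = (V,E) be a graph with integer weights w ≥ 1, and suppose u, v satisfy dist_w(u,v) > D for an integer D > 4·log₂(‖w‖₁). Then there exists a nonempty set S ⊆ V with |S| ≤ |V|/2 such that the number of edges leaving S satisfies |E_G(S, V\S)| ≤ 4·w(S)·log₂(‖w‖₁)/D, where w(S) denotes the total weight of edges with at least one endpoint in S. -/

import Mathlib

open Finset
open scoped Classical

noncomputable def distW {V : Type*} (G : SimpleGraph V) (w : Sym2 V → ℕ) (u v : V) : ℕ∞ :=
  ⨅ p : G.Walk u v, ((p.edges.map w).sum : ℕ∞)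

lemma enat_iInf_attained {ι : Sort*} [Nonempty ι] (f : ι → ℕ∞) :
    ∃ i, f i = ⨅ j, f j := by
  by_cases h : (⨅ j, f j) = ⊤
  · exact ⟨Classical.arbitrary ι, by rw [iInf_eq_top.mp h (Classical.arbitrary ι), h]⟩
  · have hlt : (⨅ j, f j) < (⨅ j, f j) + 1 := (ENat.lt_add_one_iff h).mpr le_rfl
    obtain ⟨i, hi⟩ := iInf_lt_iff.mp hlt
    exact ⟨i, le_antisymm ((ENat.lt_add_one_iff h).mp hi) (iInf_le _ i)⟩

section distlemmas
variable {V : Type*} (G : SimpleGraph V) (w : Sym2 V → ℕ)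

lemma distW_le_walk {x y : V} (p : G.Walk x y) : distW G w x y ≤ ((p.edges.map w).sum : ℕ∞) :=
  iInf_le _ p

lemma distW_self (x : V) : distW G w x x = 0 := by
  refine le_antisymm ?_ (zero_le)
  simpa using distW_le_walk G w (SimpleGraph.Walk.nil : G.Walk x x)

lemma distW_symm (x y : V) : distW G w x y = distW G w y x := by
  have key : ∀ a b : V, distW G w a b ≤ distW G w b a := by
    intro a b
    refine le_iInf fun q => ?_
    have := distW_le_walk G w q.reverse
    simpa [SimpleGraph.Walk.edges_reverse, List.map_reverse, List.sum_reverse] using this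
  exact le_antisymm (key x y) (key y x)

lemma distW_triangle (x y z : V) : distW G w x z ≤ distW G w x y + distW G w y z := by
  by_cases h1 : distW G w x y = ⊤
  · simp [h1]
  by_cases h2 : distW G w y z = ⊤
  · simp [h2]
  have n1 : Nonempty (G.Walk x y) := by
    by_contra hn
    exact h1 (by
      have : IsEmpty (G.Walk x y) := not_nonempty_iff.mp hn
      simp [distW, iInf_of_empty])
  have n2 : Nonempty (G.Walk y z) := by
    by_contra hn
    exact h2 (by
      have : IsEmpty (G.Walk y z) := not_nonempty_iff.mp hn
      simp [distW, iInf_of_empty])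
  obtain ⟨p, hp⟩ := enat_iInf_attained (fun p : G.Walk x y => ((p.edges.map w).sum : ℕ∞))
  obtain ⟨q, hq⟩ := enat_iInf_attained (fun q : G.Walk y z => ((q.edges.map w).sum : ℕ∞))
  have hle := distW_le_walk G w (p.append q)
  rw [SimpleGraph.Walk.edges_append, List.map_append, List.sum_append] at hle
  have hxy : distW G w x y = ((p.edges.map w).sum : ℕ∞) := hp.symm
  have hyz : distW G w y z = ((q.edges.map w).sum : ℕ∞) := hq.symm
  rw [hxy, hyz, ← Nat.cast_add]
  exact hle

lemma distW_le_adj {x y z : V} (h : G.Adj x y) :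
    distW G w z y ≤ distW G w z x + w s(x, y) := by
  refine le_trans (distW_triangle G w z x y) ?_
  have : distW G w x y ≤ (w s(x,y) : ℕ∞) := by
    have := distW_le_walk G w (SimpleGraph.Walk.cons h SimpleGraph.Walk.nil)
    simpa using this
  exact add_le_add_right this _
end distlemmas

section gr
variable {V : Type*} [Fintype V] [DecidableEq V] (G : SimpleGraph V) (w : Sym2 V → ℕ)

noncomputable def ballW (z : V) (r : ℕ) : Finset V :=
  univ.filter (fun x => distW G w z x ≤ (r : ℕ∞))

lemma mem_ballW {z x : V} {r : ℕ} : x ∈ ballW G w z r ↔ distW G w z x ≤ (r : ℕ∞) := by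
  simp [ballW]

noncomputable def aE (z : V) : Sym2 V → ℕ∞ :=
  Sym2.lift ⟨fun x y => min (distW G w z x) (distW G w z y), fun x y => min_comm _ _⟩

noncomputable def phi (z : V) (r : ℕ) (e : Sym2 V) : ℕ :=
  min (w e) (((r : ℕ∞) - aE G w z e).toNat)

noncomputable def volW (z : V) (r : ℕ) : ℕ := ∑ e ∈ G.edgeFinset, phi G w z r e

noncomputable def cutW (z : V) (r : ℕ) : ℕ :=
  (G.edgeFinset.filter (fun e => ∃ x ∈ ballW G w z r, ∃ y ∉ ballW G w z r, e = s(x, y))).card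

noncomputable def wSW (z : V) (r : ℕ) : ℕ :=
  ∑ e ∈ G.edgeFinset.filter (fun e => ∃ x ∈ ballW G w z r, x ∈ e), w e

lemma keycut (z : V) (r : ℕ) (e : Sym2 V) (he : e ∈ G.edgeFinset)
    (hP : ∃ x ∈ ballW G w z r, ∃ y ∉ ballW G w z r, e = s(x, y)) :
    ∃ dx : ℕ, aE G w z e = (dx : ℕ∞) ∧ dx ≤ r ∧ r + 1 - dx ≤ w e := by
  obtain ⟨x, hx, y, hy, rfl⟩ := hP
  rw [mem_ballW] at hx
  rw [mem_ballW] at hy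
  push_neg at hy
  have hadj : G.Adj x y := (SimpleGraph.mem_edgeSet G).mp (SimpleGraph.mem_edgeFinset.mp he)
  have hstep : distW G w z y ≤ distW G w z x + w s(x, y) := distW_le_adj G w hadj
  have hxt : distW G w z x ≠ ⊤ := fun h => by simp [h] at hx
  obtain ⟨dx, hdx⟩ : ∃ dx : ℕ, (dx : ℕ∞) = distW G w z x :=
    ⟨(distW G w z x).toNat, ENat.coe_toNat hxt⟩
  refine ⟨dx, ?_, ?_, ?_⟩
  · have h1 : aE G w z s(x, y) = min (distW G w z x) (distW G w z y) := rfl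
    rw [h1, min_eq_left (le_of_lt (lt_of_le_of_lt hx hy)), ← hdx]
  · rw [← hdx] at hx
    exact ENat.coe_le_coe.mp hx
  · have h1 : ((r : ℕ∞)) < (dx : ℕ∞) + (w s(x,y) : ℕ∞) := by
      rw [← hdx] at hstep; exact lt_of_lt_of_le hy hstep
    have h2 : (r : ℕ) < dx + w s(x, y) := by exact_mod_cast h1
    omega

lemma sub_toNat (r k : ℕ) : (((r : ℕ∞)) - (k : ℕ∞)).toNat = r - k := by
  have h1 : ((r : ℕ∞)) - (k : ℕ∞) = ((r - k : ℕ) : ℕ∞) := by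
    exact_mod_cast (ENat.coe_sub r k).symm
  rw [h1]
  exact ENat.toNat_coe _

lemma phimono (z : V) (r : ℕ) (e : Sym2 V) : phi G w z r e ≤ phi G w z (r + 1) e := by
  unfold phi
  refine min_le_min le_rfl ?_
  rcases eq_or_ne (aE G w z e) ⊤ with h | h
  · simp [h, tsub_eq_zero_of_le le_top]
  · obtain ⟨k, hk⟩ : ∃ k : ℕ, (k : ℕ∞) = aE G w z e :=
      ⟨(aE G w z e).toNat, ENat.coe_toNat h⟩
    rw [← hk, sub_toNat, sub_toNat]
    omega

lemma cutphi (z : V) (r : ℕ) (e : Sym2 V) (he : e ∈ G.edgeFinset)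
    (hP : ∃ x ∈ ballW G w z r, ∃ y ∉ ballW G w z r, e = s(x, y)) :
    phi G w z r e + 1 ≤ phi G w z (r + 1) e ∧ phi G w z r e + 1 ≤ w e := by
  obtain ⟨dx, ha, hdr, hwge⟩ := keycut G w z r e he hP
  unfold phi
  rw [ha, sub_toNat, sub_toNat]
  omega

lemma K1 (z : V) (r : ℕ) : volW G w z r + cutW G w z r ≤ volW G w z (r + 1) := by
  have hrw : volW G w z r + cutW G w z r =
      ∑ e ∈ G.edgeFinset, (phi G w z r e +
        if (∃ x ∈ ballW G w z r, ∃ y ∉ ballW G w z r, e = s(x, y)) then 1 else 0) := by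
    unfold volW cutW
    rw [Finset.sum_add_distrib, Finset.card_filter]
  rw [hrw]
  unfold volW
  refine Finset.sum_le_sum fun e he => ?_
  by_cases hP : ∃ x ∈ ballW G w z r, ∃ y ∉ ballW G w z r, e = s(x, y)
  · simp only [hP, if_true]
    exact (cutphi G w z r e he hP).1
  · simp only [hP, if_false, add_zero]
    exact phimono G w z r e

lemma phi_zero_of_not_touch (z : V) (r : ℕ) (e : Sym2 V)
    (hT : ∀ x ∈ ballW G w z r, x ∉ e) : phi G w z r e = 0 := by
  unfold phi
  refine Nat.le_zero.mp (le_trans (min_le_right _ _) ?_)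
  have hsub : (r : ℕ∞) - aE G w z e = 0 := by
    refine tsub_eq_zero_of_le ?_
    induction e using Sym2.inductionOn with
    | hf x y =>
      have hx : ¬ distW G w z x ≤ (r : ℕ∞) :=
        fun hle => hT x ((mem_ballW G w).mpr hle) (Sym2.mem_mk_left x y)
      have hy : ¬ distW G w z y ≤ (r : ℕ∞) :=
        fun hle => hT y ((mem_ballW G w).mpr hle) (Sym2.mem_mk_right x y)
      push_neg at hx hy
      have h1 : aE G w z s(x, y) = min (distW G w z x) (distW G w z y) := rfl
      rw [h1]
      exact le_of_lt (lt_min hx hy)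
  simp [hsub]

lemma K3 (z : V) (r : ℕ) : volW G w z r + cutW G w z r ≤ wSW G w z r := by
  have hrw : volW G w z r + cutW G w z r =
      ∑ e ∈ G.edgeFinset, (phi G w z r e +
        if (∃ x ∈ ballW G w z r, ∃ y ∉ ballW G w z r, e = s(x, y)) then 1 else 0) := by
    unfold volW cutW
    rw [Finset.sum_add_distrib, Finset.card_filter]
  have hrw2 : wSW G w z r = ∑ e ∈ G.edgeFinset,
      (if (∃ x ∈ ballW G w z r, x ∈ e) then w e else 0) := by
    unfold wSW
    rw [Finset.sum_filter]
  rw [hrw, hrw2]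
  refine Finset.sum_le_sum fun e he => ?_
  by_cases hT : ∃ x ∈ ballW G w z r, x ∈ e
  · simp only [hT, if_true]
    by_cases hP : ∃ x ∈ ballW G w z r, ∃ y ∉ ballW G w z r, e = s(x, y)
    · simp only [hP, if_true]
      have h1 := (cutphi G w z r e he hP).2
      omega
    · simp only [hP, if_false, add_zero]
      exact min_le_left _ _
  · push_neg at hT
    have hphi := phi_zero_of_not_touch G w z r e hT
    have hind : ¬ (∃ x ∈ ballW G w z r, ∃ y ∉ ballW G w z r, e = s(x, y)) := by
      rintro ⟨x, hx, y, hy, rfl⟩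
      exact hT x hx (Sym2.mem_mk_left x y)
    simp [hphi, hind]

lemma K4 (z : V) (r : ℕ) : volW G w z r ≤ ∑ e ∈ G.edgeFinset, w e :=
  Finset.sum_le_sum fun e _ => min_le_left _ _

lemma good_radius (z : V) (c : ℝ) (hc : 0 ≤ c) (R : ℕ)
    (hM : ((∑ e ∈ G.edgeFinset, w e : ℕ) : ℝ) < (1 + c) ^ R) :
    ∃ r ≤ R, ((cutW G w z r : ℕ) : ℝ) ≤ c * ((wSW G w z r : ℕ) : ℝ) := by
  by_contra hbad
  push_neg at hbad
  have hbad' : ∀ r ≤ R, c * (wSW G w z r : ℝ) < (cutW G w z r : ℝ) := fun r hr => hbad r hr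
  have hcut0 : 1 ≤ cutW G w z 0 := by
    have h0 : (0 : ℝ) ≤ c * (wSW G w z 0 : ℝ) := mul_nonneg hc (Nat.cast_nonneg _)
    have h1 : (0 : ℝ) < (cutW G w z 0 : ℝ) := lt_of_le_of_lt h0 (hbad' 0 (Nat.zero_le R))
    exact_mod_cast h1
  have grow : ∀ k ≤ R, (1 + c) ^ k ≤ (volW G w z (k + 1) : ℝ) := by
    intro k
    induction k with
    | zero =>
      intro _
      have h1 : 1 ≤ volW G w z 1 := le_trans (by omega) (K1 G w z 0)
      simpa using (by exact_mod_cast h1 : (1:ℝ) ≤ (volW G w z 1 : ℝ))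
    | succ n ih =>
      intro hn
      have hih := ih (by omega)
      have hb := hbad' (n + 1) hn
      have hK3 := K3 G w z (n + 1)
      have hvolle : (volW G w z (n+1) : ℝ) ≤ (wSW G w z (n+1) : ℝ) := by
        exact_mod_cast le_trans (Nat.le_add_right _ _) hK3
      have hcutgt : c * (volW G w z (n+1) : ℝ) ≤ (cutW G w z (n+1) : ℝ) :=
        le_of_lt (lt_of_le_of_lt (by nlinarith) hb)
      have hstep : ((volW G w z (n+1) : ℝ)) + c * (volW G w z (n+1) : ℝ)
          ≤ (volW G w z (n+2) : ℝ) := by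
        have h2 : (volW G w z (n+1) : ℝ) + (cutW G w z (n+1) : ℝ)
            ≤ (volW G w z (n+2) : ℝ) := by exact_mod_cast K1 G w z (n+1)
        linarith
      calc (1 + c) ^ (n + 1) = (1 + c) * (1 + c) ^ n := by ring
        _ ≤ (1 + c) * (volW G w z (n+1) : ℝ) := mul_le_mul_of_nonneg_left hih (by linarith)
        _ = (volW G w z (n+1) : ℝ) + c * (volW G w z (n+1) : ℝ) := by ring
        _ ≤ _ := hstep
  have hfin := grow R le_rfl
  have hK4 : (volW G w z (R + 1) : ℝ) ≤ ((∑ e ∈ G.edgeFinset, w e : ℕ) : ℝ) := by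
    exact_mod_cast K4 G w z (R + 1)
  linarith
end gr

theorem stmt8 {V : Type*} [Fintype V] [DecidableEq V] (G : SimpleGraph V)
    (w : Sym2 V → ℕ) (hw : ∀ e ∈ G.edgeSet, 1 ≤ w e) (u v : V) (D : ℕ)
    (hD : 4 * Real.logb 2 (∑ e ∈ G.edgeFinset, w e) < D)
    (hfar : (D : ℕ∞) < distW G w u v) :
    ∃ S : Finset V, S.Nonempty ∧ 2 * S.card ≤ Fintype.card V ∧
      ((G.edgeFinset.filter (fun e => ∃ x ∈ S, ∃ y ∉ S, e = s(x, y))).card : ℝ)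
        ≤ 4 * (∑ e ∈ G.edgeFinset.filter (fun e => ∃ x ∈ S, x ∈ e), (w e : ℝ))
            * Real.logb 2 (∑ e ∈ G.edgeFinset, w e) / D := by
  classical
  have huv : u ≠ v := by
    intro h
    subst h
    rw [distW_self] at hfar
    simp at hfar
  have hcard2 : 2 ≤ Fintype.card V := Fintype.one_lt_card_iff_nontrivial.mpr ⟨u, v, huv⟩
  set M : ℕ := ∑ e ∈ G.edgeFinset, w e with hMdef
  have hsum : (∑ e ∈ G.edgeFinset, (w e : ℝ)) = (M : ℝ) := by
    rw [hMdef]; push_cast; ring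
  rw [hsum] at hD
  by_cases hMbig : 2 ≤ M
  · -- main case
    have hMpos : (0 : ℝ) < (M : ℝ) := by exact_mod_cast (by omega : 0 < M)
    set L : ℝ := Real.logb 2 (M : ℝ) with hLdef
    have hL1 : 1 ≤ L := by
      rw [hLdef]
      have h2 : Real.logb 2 2 = 1 := Real.logb_self_eq_one (by norm_num)
      rw [← h2]
      exact Real.logb_le_logb_of_le (by norm_num) (by norm_num) (by exact_mod_cast hMbig)
    have hD0 : (0 : ℝ) < (D : ℝ) := by
      have : (4 : ℝ) ≤ 4 * L := by linarith
      linarith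
    have hD5 : 5 ≤ D := by
      have h4 : (4 : ℝ) < (D : ℝ) := by linarith
      exact_mod_cast (by exact_mod_cast Nat.lt_of_lt_of_le (by exact_mod_cast h4) le_rfl : 4 < D)
    set c : ℝ := 4 * L / D with hcdef
    have hc0 : 0 < c := by positivity
    have hc1 : c ≤ 1 := by
      rw [hcdef, div_le_one hD0]
      linarith
    set R : ℕ := (D - 1) / 2 with hRdef
    have hDR : D < 4 * R := by omega
    have h2c : (2 : ℝ) ^ c ≤ 1 + c := by
      have hconv := convexOn_exp.2 (Set.mem_univ (0 : ℝ)) (Set.mem_univ (Real.log 2))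
        (by linarith : (0 : ℝ) ≤ 1 - c) hc0.le (by ring)
      simp only [smul_eq_mul, mul_zero, zero_add, Real.exp_zero, Real.exp_log two_pos] at hconv
      rw [Real.rpow_def_of_pos two_pos]
      calc Real.exp (Real.log 2 * c) = Real.exp (c * Real.log 2) := by rw [mul_comm]
        _ ≤ (1 - c) * 1 + c * 2 := hconv
        _ = 1 + c := by ring
    have hLcR : L < c * R := by
      rw [hcdef, div_mul_eq_mul_div, lt_div_iff₀ hD0]
      have hDR' : (D : ℝ) < 4 * (R : ℝ) := by exact_mod_cast hDR
      nlinarith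
    have hM' : ((∑ e ∈ G.edgeFinset, w e : ℕ) : ℝ) < (1 + c) ^ R := by
      rw [← hMdef]
      calc (M : ℝ) = (2 : ℝ) ^ L := (Real.rpow_logb two_pos (by norm_num) hMpos).symm
        _ < (2 : ℝ) ^ (c * R) := Real.rpow_lt_rpow_of_exponent_lt one_lt_two hLcR
        _ = ((2 : ℝ) ^ c) ^ (R : ℕ) := by
            rw [Real.rpow_mul (by norm_num), Real.rpow_natCast]
        _ ≤ (1 + c) ^ R := pow_le_pow_left₀ (Real.rpow_nonneg (by norm_num) c) h2c R
    obtain ⟨ru, hru, hgu⟩ := good_radius G w u c hc0.le R hM'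
    obtain ⟨rv, hrv, hgv⟩ := good_radius G w v c hc0.le R hM'
    have hdisj : Disjoint (ballW G w u ru) (ballW G w v rv) := by
      rw [Finset.disjoint_left]
      intro x hxu hxv
      rw [mem_ballW] at hxu
      rw [mem_ballW] at hxv
      have htri : distW G w u v ≤ distW G w u x + distW G w v x := by
        rw [distW_symm G w v x]
        exact distW_triangle G w u x v
      have hsum2 : distW G w u x + distW G w v x ≤ ((ru + rv : ℕ) : ℕ∞) := by
        push_cast
        exact add_le_add hxu hxv
      have hrD : ((ru + rv : ℕ) : ℕ∞) ≤ (D : ℕ∞) := by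
        exact_mod_cast Nat.cast_le.mpr (by omega : ru + rv ≤ D)
      have : distW G w u v ≤ (D : ℕ∞) := le_trans htri (le_trans hsum2 hrD)
      exact absurd (lt_of_lt_of_le hfar this) (lt_irrefl _)
    have hcards : (ballW G w u ru).card + (ballW G w v rv).card ≤ Fintype.card V := by
      rw [← Finset.card_union_of_disjoint hdisj]
      exact le_trans (Finset.card_le_univ _) (le_of_eq (Finset.card_univ))
    have key : ∀ (z : V) (r : ℕ),
        ((cutW G w z r : ℕ) : ℝ) ≤ c * ((wSW G w z r : ℕ) : ℝ) →
        2 * (ballW G w z r).card ≤ Fintype.card V →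
        ∃ S : Finset V, S.Nonempty ∧ 2 * S.card ≤ Fintype.card V ∧
          ((G.edgeFinset.filter (fun e => ∃ x ∈ S, ∃ y ∉ S, e = s(x, y))).card : ℝ)
            ≤ 4 * (∑ e ∈ G.edgeFinset.filter (fun e => ∃ x ∈ S, x ∈ e), (w e : ℝ))
                * Real.logb 2 (∑ e ∈ G.edgeFinset, (w e : ℝ)) / D := by
      intro z r hg hcd
      refine ⟨ballW G w z r, ⟨z, (mem_ballW G w).mpr (by rw [distW_self]; exact zero_le)⟩, hcd, ?_⟩
      rw [hsum, ← hLdef]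
      have hws : (∑ e ∈ G.edgeFinset.filter (fun e => ∃ x ∈ ballW G w z r, x ∈ e), (w e : ℝ))
          = ((wSW G w z r : ℕ) : ℝ) := by
        unfold wSW
        push_cast
        ring
      rw [hws]
      calc ((cutW G w z r : ℕ) : ℝ) ≤ c * ((wSW G w z r : ℕ) : ℝ) := hg
        _ = 4 * ((wSW G w z r : ℕ) : ℝ) * L / D := by rw [hcdef]; ring
    rcases le_total (ballW G w u ru).card (ballW G w v rv).card with hle | hle
    · exact key u ru hgu (by omega)
    · exact key v rv hgv (by omega)
  · -- corner case M ≤ 1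
    have hL0 : Real.logb 2 (M : ℝ) = 0 := by
      interval_cases M
      · simp
      · simp
    have hD1 : 1 ≤ D := by
      rw [hL0] at hD
      simp at hD
      exact_mod_cast Nat.one_le_iff_ne_zero.mpr (by
        intro h; rw [h] at hD; simp at hD)
    -- find z ∈ {u,v} with no incident edge
    have hz : ∃ z : V, ∀ e ∈ G.edgeFinset, z ∉ e := by
      by_contra hcon
      push_neg at hcon
      obtain ⟨e1, he1, hue1⟩ := hcon u
      obtain ⟨e2, he2, hve2⟩ := hcon v
      have hcle : G.edgeFinset.card ≤ M := by
        rw [hMdef]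
        calc G.edgeFinset.card = ∑ _e ∈ G.edgeFinset, 1 := by simp
          _ ≤ ∑ e ∈ G.edgeFinset, w e :=
            Finset.sum_le_sum (fun e he => hw e (SimpleGraph.mem_edgeFinset.mp he))
      have hone : G.edgeFinset.card ≤ 1 := le_trans hcle (by omega)
      have he12 : e1 = e2 := Finset.card_le_one.mp hone e1 he1 e2 he2
      subst he12
      have heq : e1 = s(u, v) := (Sym2.mem_and_mem_iff huv).mp ⟨hue1, hve2⟩
      subst heq
      have hadj : G.Adj u v := (SimpleGraph.mem_edgeSet G).mp (SimpleGraph.mem_edgeFinset.mp he1)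
      have hle : distW G w u v ≤ (w s(u, v) : ℕ∞) := by
        have := distW_le_adj G w hadj (z := u)
        rwa [distW_self, zero_add] at this
      have hwM : w s(u, v) ≤ M := by
        rw [hMdef]
        exact Finset.single_le_sum (fun e _ => Nat.zero_le _) he1
      have : distW G w u v ≤ (D : ℕ∞) := by
        refine le_trans hle ?_
        exact_mod_cast le_trans (Nat.cast_le.mpr hwM) (Nat.cast_le.mpr (by omega))
      exact absurd (lt_of_lt_of_le hfar this) (lt_irrefl _)
    obtain ⟨z, hzno⟩ := hz
    refine ⟨{z}, ⟨z, Finset.mem_singleton_self z⟩, by simpa using hcard2, ?_⟩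
    have hcut0 : (G.edgeFinset.filter
        (fun e => ∃ x ∈ ({z} : Finset V), ∃ y ∉ ({z} : Finset V), e = s(x, y))) = ∅ := by
      refine Finset.filter_eq_empty_iff.mpr fun {e} he => ?_
      rintro ⟨x, hx, y, hy, rfl⟩
      rw [Finset.mem_singleton] at hx
      subst hx
      exact hzno _ he (Sym2.mem_mk_left x y)
    rw [hcut0, hsum, hL0]
    simp
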